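/- Let (Ω, F, P) be a probability space, let M ≥ 0 be an integrable random variable with E_P[M] = 1, let Q := P.withDensity(M), let S := M⁻¹·1_{M>0}, and set m := P(M = 0). Then for every x ∈ ℝ and every α ∈ [0,1]: E_Q[(S − e^x)₊] + α·m = e^x · E_P[(e^{−x} − M)₊] + (α − 1)·m, and E_Q[(e^x − S)₊] = e^x · E_P[(M − e^{−x})₊]. That is, the α-collateralised Call price on S under Q equals e^x times the Put price on M under P at log-strike −x, plus (α−1)·m, and the Put price on S under Q equals e^x times the Call price on M under P at log-strike −x. -/

import Mathlib

open MeasureTheory Filter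

/-- Standard normal cumulative distribution function. -/
noncomputable def stdNormalCDF (y : ℝ) : ℝ :=
  ∫ t in Set.Iic y, Real.exp (-t ^ 2 / 2) / Real.sqrt (2 * Real.pi)

/-- Black-Scholes d₊ (maturity `T`, log-strike `x`, volatility `σ`). -/
noncomputable def dplus (T x σ : ℝ) : ℝ := -x / (σ * Real.sqrt T) + σ * Real.sqrt T / 2

/-- Black-Scholes d₋ (maturity `T`, log-strike `x`, volatility `σ`). -/
noncomputable def dminus (T x σ : ℝ) : ℝ := -x / (σ * Real.sqrt T) - σ * Real.sqrt T / 2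

/-- Black-Scholes Call price (maturity `T`, log-strike `x`, volatility `σ`),
with the convention `CBS T x 0 = max (1 - exp x) 0`. -/
noncomputable def CBS (T x σ : ℝ) : ℝ :=
  if σ = 0 then max (1 - Real.exp x) 0
  else stdNormalCDF (dplus T x σ) - Real.exp x * stdNormalCDF (dminus T x σ)

/-- Black-Scholes Put price (maturity `T`, log-strike `x`, volatility `σ`),
with the convention `PBS T x 0 = max (exp x - 1) 0`. -/
noncomputable def PBS (T x σ : ℝ) : ℝ :=
  if σ = 0 then max (Real.exp x - 1) 0
  else Real.exp x * stdNormalCDF (-dminus T x σ) - stdNormalCDF (-dplus T x σ)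

/-- duality relations between option prices: the `α`-collateralised Call
on `S` under `Q` equals `e^x` times the Put on `M` under `P` at log-strike `-x` plus
`(α-1)·m`, and the Put on `S` under `Q` equals `e^x` times the Call on `M` under `P`. -/
theorem duality_option_prices
    {Ω : Type*} [MeasurableSpace Ω] (P : Measure Ω) [IsProbabilityMeasure P]
    (M : Ω → ℝ) (hMmeas : Measurable M) (hM0 : ∀ ω, 0 ≤ M ω)
    (hMint : Integrable M P) (hM1 : ∫ ω, M ω ∂P = 1)
    (S : Ω → ℝ) (hSdef : ∀ ω, S ω = if 0 < M ω then (M ω)⁻¹ else 0)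
    (m : ℝ) (hm : m = (P {ω | M ω = 0}).toReal)
    (x : ℝ) (α : ℝ) (hα : α ∈ Set.Icc (0:ℝ) 1) :
    ((∫ ω, max (S ω - Real.exp x) 0 ∂(P.withDensity fun ω => ENNReal.ofReal (M ω)))
        + α * m
      = Real.exp x * (∫ ω, max (Real.exp (-x) - M ω) 0 ∂P) + (α - 1) * m) ∧
    ((∫ ω, max (Real.exp x - S ω) 0 ∂(P.withDensity fun ω => ENNReal.ofReal (M ω)))
      = Real.exp x * ∫ ω, max (M ω - Real.exp (-x)) 0 ∂P) := by

  have hSmeas : Measurable S := by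
    have : S = fun ω => if 0 < M ω then (M ω)⁻¹ else 0 := funext hSdef
    rw [this]
    exact Measurable.ite (measurableSet_lt measurable_const hMmeas) hMmeas.inv measurable_const
  have hset : MeasurableSet {ω | M ω = 0} := hMmeas (measurableSet_singleton 0)
  have hexp : Real.exp x * Real.exp (-x) = 1 := by
    rw [← Real.exp_add]; simp
  -- density rewrite
  have hdens : ∀ (g : Ω → ℝ), (∫ ω, g ω ∂(P.withDensity fun ω => ENNReal.ofReal (M ω)))
      = ∫ ω, M ω * g ω ∂P := by
    intro g
    have h1 : (fun ω => ENNReal.ofReal (M ω)) = fun ω => (ENNReal.ofNNReal (M ω).toNNReal) := rfl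
    have hmt : Measurable fun ω => (M ω).toNNReal := measurable_real_toNNReal.comp hMmeas
    rw [h1, integral_withDensity_eq_integral_smul hmt g]
    refine integral_congr_ae (Filter.Eventually.of_forall fun ω => ?_)
    simp [NNReal.smul_def, Real.coe_toNNReal _ (hM0 ω)]
  -- pointwise identity for the call side
  have hpt1 : ∀ ω, M ω * max (S ω - Real.exp x) 0
      + Set.indicator {ω | M ω = 0} (fun _ => (1:ℝ)) ω
      = Real.exp x * max (Real.exp (-x) - M ω) 0 := by
    intro ω
    rcases (hM0 ω).eq_or_lt with h0 | h0
    · have : S ω = 0 := by rw [hSdef ω]; simp [← h0]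
      simp [← h0, Set.indicator_of_mem, Real.exp_nonneg, hexp,
        max_eq_left (le_of_lt (by positivity : (0:ℝ) < Real.exp (-x)))]
    · have hS : S ω = (M ω)⁻¹ := by rw [hSdef ω]; simp [h0]
      have hind : Set.indicator {ω | M ω = 0} (fun _ => (1:ℝ)) ω = 0 :=
        Set.indicator_of_notMem (by simp [ne_of_gt h0]) _
      rw [hS, hind, add_zero]
      rcases le_total (M ω)⁻¹ (Real.exp x) with h | h
      · have h2 : Real.exp (-x) ≤ M ω := by
          nlinarith [mul_le_mul_of_nonneg_left h h0.le,
            mul_inv_cancel₀ (ne_of_gt h0), Real.exp_pos (-x), hexp]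
        rw [max_eq_right (by linarith), max_eq_right (by linarith)]
        ring
      · have h2 : M ω ≤ Real.exp (-x) := by
          rw [Real.exp_neg]
          exact (le_inv_comm₀ h0 (Real.exp_pos x)).mpr h
        rw [max_eq_left (by linarith), max_eq_left (by linarith)]
        field_simp
        linarith [hexp]
  -- pointwise identity for the put side
  have hpt2 : ∀ ω, M ω * max (Real.exp x - S ω) 0
      = Real.exp x * max (M ω - Real.exp (-x)) 0 := by
    intro ω
    rcases (hM0 ω).eq_or_lt with h0 | h0
    · have : S ω = 0 := by rw [hSdef ω]; simp [← h0]
      rw [this, ← h0]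
      have : max (0 - Real.exp (-x)) 0 = 0 :=
        max_eq_right (by linarith [Real.exp_pos (-x)])
      simp [this]
      positivity
    · have hS : S ω = (M ω)⁻¹ := by rw [hSdef ω]; simp [h0]
      rw [hS]
      rcases le_total (M ω)⁻¹ (Real.exp x) with h | h
      · have h2 : Real.exp (-x) ≤ M ω := by
          nlinarith [mul_le_mul_of_nonneg_left h h0.le,
            mul_inv_cancel₀ (ne_of_gt h0), Real.exp_pos (-x), hexp]
        rw [max_eq_left (by linarith), max_eq_left (by linarith)]
        field_simp
        linarith [hexp]
      · have h2 : M ω ≤ Real.exp (-x) := by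
          rw [Real.exp_neg]
          exact (le_inv_comm₀ h0 (Real.exp_pos x)).mpr h
        rw [max_eq_right (by linarith), max_eq_right (by linarith)]
        ring
  -- integrabilities
  have hf1meas : Measurable fun ω => M ω * max (S ω - Real.exp x) 0 :=
    hMmeas.mul ((hSmeas.sub measurable_const).max measurable_const)
  have hindint : Integrable (Set.indicator {ω | M ω = 0} (fun _ => (1:ℝ))) P :=
    (integrable_const (1:ℝ)).indicator hset
  have hf1bd : ∀ ω, M ω * max (S ω - Real.exp x) 0 ≤ 1 := by
    intro ω
    have h := hpt1 ω
    have hind : (0:ℝ) ≤ Set.indicator {ω | M ω = 0} (fun _ => (1:ℝ)) ω :=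
      Set.indicator_nonneg (fun _ _ => zero_le_one) ω
    have hmax : max (Real.exp (-x) - M ω) 0 ≤ Real.exp (-x) :=
      max_le (by linarith [hM0 ω]) (Real.exp_nonneg _)
    nlinarith [Real.exp_pos x, Real.exp_pos (-x)]
  have hf1nn : ∀ ω, 0 ≤ M ω * max (S ω - Real.exp x) 0 := fun ω =>
    mul_nonneg (hM0 ω) (le_max_right _ _)
  have hf1int : Integrable (fun ω => M ω * max (S ω - Real.exp x) 0) P := by
    refine (integrable_const (1:ℝ)).mono' hf1meas.aestronglyMeasurable
      (Filter.Eventually.of_forall fun ω => ?_)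
    rw [Real.norm_eq_abs, abs_of_nonneg (hf1nn ω)]
    simpa using hf1bd ω
  have hhint : Integrable (fun ω => max (Real.exp (-x) - M ω) 0) P := by
    refine (integrable_const (Real.exp (-x))).mono'
      (((measurable_const.sub hMmeas).max measurable_const).aestronglyMeasurable)
      (Filter.Eventually.of_forall fun ω => ?_)
    rw [Real.norm_eq_abs, abs_of_nonneg (le_max_right _ _)]
    exact max_le (by linarith [hM0 ω]) (Real.exp_nonneg _)
  have hindval : ∫ ω, Set.indicator {ω | M ω = 0} (fun _ => (1:ℝ)) ω ∂P = m := by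
    rw [hm, integral_indicator hset]
    simp
    rfl
  have key1 : ∫ ω, M ω * max (S ω - Real.exp x) 0 ∂P
      = Real.exp x * (∫ ω, max (Real.exp (-x) - M ω) 0 ∂P) - m := by
    have hsum := integral_add hf1int hindint
    have hcong : ∫ ω, (M ω * max (S ω - Real.exp x) 0
        + Set.indicator {ω | M ω = 0} (fun _ => (1:ℝ)) ω) ∂P
        = ∫ ω, Real.exp x * max (Real.exp (-x) - M ω) 0 ∂P :=
      integral_congr_ae (Filter.Eventually.of_forall fun ω => hpt1 ω)
    rw [hcong] at hsum
    rw [integral_const_mul] at hsum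
    rw [hindval] at hsum
    linarith
  constructor
  · rw [hdens, key1]; ring
  · rw [hdens]
    have : ∫ ω, M ω * max (Real.exp x - S ω) 0 ∂P
        = ∫ ω, Real.exp x * max (M ω - Real.exp (-x)) 0 ∂P :=
      integral_congr_ae (Filter.Eventually.of_forall fun ω => hpt2 ω)
    rw [this, integral_const_mul]
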